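/- (Inequality (A.4) in the proof of Lemma 2.) Let L : ℝ^p → ℝ be twice continuously differentiable, let β* ∈ ℝ^p with support S* = {j : β*_j ≠ 0}, let λ > 0, and let β̃ be a global minimizer of β ↦ L(β) + λ‖β‖₁. If ‖∇L(β*)‖_∞ ≤ λ/2, then, writing w = β̃ − β*, there exists a point β̄ on the line segment between β* and β̃ such that wᵀ∇²L(β̄)w + λ‖w‖₁ ≤ 4λ ∑_{j ∈ S*} |w_j|. -/

import Mathlib

open scoped BigOperators Classical

noncomputable section

/-- Inequality (A.4) in the proof of Lemma 2: writing `w = β̃ − β*`, there is a point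
`β̄` on the segment between `β*` and `β̃` with
`wᵀ∇²L(β̄)w + λ‖w‖₁ ≤ 4λ ∑_{j ∈ S*} |wⱼ|`. -/
theorem lasso_basic_inequality
    {p : ℕ} (L : EuclideanSpace ℝ (Fin p) → ℝ)
    (hsmooth : ContDiff ℝ 2 L)
    (βs : EuclideanSpace ℝ (Fin p)) (lam : ℝ) (hlam : 0 < lam)
    (βt : EuclideanSpace ℝ (Fin p))
    (hmin : ∀ β : EuclideanSpace ℝ (Fin p),
      L βt + lam * ∑ j, |βt j| ≤ L β + lam * ∑ j, |β j|)
    (hgrad : ∀ j : Fin p, |fderiv ℝ L βs (EuclideanSpace.single j 1)| ≤ lam / 2) :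
    ∃ βbar ∈ segment ℝ βs βt,
      fderiv ℝ (fun x => fderiv ℝ L x) βbar (βt - βs) (βt - βs) +
          lam * ∑ j, |(βt - βs) j| ≤
        4 * lam * ∑ j ∈ Finset.univ.filter (fun j => βs j ≠ 0), |(βt - βs) j| := by
  classical
  set w : EuclideanSpace ℝ (Fin p) := βt - βs with hwdef
  set φ : ℝ → EuclideanSpace ℝ (Fin p) := fun t => βs + t • w with hφdef
  have hL1 : Differentiable ℝ L := hsmooth.differentiable (by norm_num)
  have hL2 : Differentiable ℝ (fun x => fderiv ℝ L x) :=
    (hsmooth.fderiv_right (m := 1) (by norm_num)).differentiable (by norm_num)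
  have hφ : ∀ t : ℝ, HasDerivAt φ w t := by
    intro t
    simpa [hφdef] using ((hasDerivAt_id t).smul_const w).const_add βs
  set g : ℝ → ℝ := fun t => L (φ t) with hgdef
  set g₁ : ℝ → ℝ := fun t => fderiv ℝ L (φ t) w with hg1def
  set g₂ : ℝ → ℝ := fun t => fderiv ℝ (fun x => fderiv ℝ L x) (φ t) w w with hg2def
  have hg : ∀ t, HasDerivAt g (g₁ t) t := fun t =>
    (hL1 (φ t)).hasFDerivAt.comp_hasDerivAt t (hφ t)
  have hg1 : ∀ t, HasDerivAt g₁ (g₂ t) t := by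
    intro t
    have hc : HasDerivAt (fun s => fderiv ℝ L (φ s))
        (fderiv ℝ (fun x => fderiv ℝ L x) (φ t) w) t :=
      (hL2 (φ t)).hasFDerivAt.comp_hasDerivAt t (hφ t)
    simpa using hc.clm_apply (hasDerivAt_const t w)
  -- Cauchy mean value theorem
  set ψ : ℝ → ℝ := fun t => g t - g 0 - t * g₁ 0 with hψdef
  have hψ : ∀ t : ℝ, HasDerivAt ψ (g₁ t - g₁ 0) t := by
    intro t
    have := ((hg t).sub_const (g 0)).sub ((hasDerivAt_id t).mul_const (g₁ 0))
    rw [one_mul] at this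
    exact this.congr_of_eventuallyEq (Filter.Eventually.of_forall fun x => by simp [hψdef])
  obtain ⟨c, hc, hceq⟩ :=
    exists_ratio_hasDerivAt_eq_ratio_slope ψ (fun t => g₁ t - g₁ 0)
      (show (0:ℝ) < 1 by norm_num)
      (fun t _ => (hψ t).continuousAt.continuousWithinAt)
      (fun t _ => hψ t)
      (fun t => t ^ 2) (fun t => 2 * t)
      (by fun_prop)
      (fun t _ => by simpa using (hasDerivAt_pow 2 t))
  -- hceq : (1^2 - 0^2) * (g₁ c - g₁ 0) = (ψ 1 - ψ 0) * (2 * c)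
  obtain ⟨d, hd, hdeq⟩ :=
    exists_hasDerivAt_eq_slope g₁ g₂ hc.1
      (fun t _ => (hg1 t).continuousAt.continuousWithinAt)
      (fun t _ => hg1 t)
  -- hdeq : g₂ d = (g₁ c - g₁ 0) / (c - 0)
  have hcne : (c : ℝ) ≠ 0 := ne_of_gt hc.1
  have hψ0 : ψ 0 = 0 := by simp [hψdef]
  have hkey : g₂ d = 2 * (g 1 - g 0 - g₁ 0) := by
    have h1 : g₁ c - g₁ 0 = ψ 1 * (2 * c) := by
      rw [hψ0] at hceq; nlinarith [hceq]
    rw [hdeq, h1]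
    have hψ1 : ψ 1 = g 1 - g 0 - g₁ 0 := by simp [hψdef]
    field_simp
    rw [hψ1]; ring
  have hφ0 : φ 0 = βs := by simp [hφdef]
  have hφ1 : φ 1 = βt := by simp [hφdef, hwdef]
  have hg1val : g 1 = L βt := by rw [hgdef]; simp [hφ1]
  have hg0val : g 0 = L βs := by rw [hgdef]; simp [hφ0]
  have hg10val : g₁ 0 = fderiv ℝ L βs w := by rw [hg1def]; simp [hφ0]
  -- the gradient bound
  set S : Finset (Fin p) := Finset.univ.filter (fun j => βs j ≠ 0) with hSdef
  have hrepr : w = ∑ j, w j • EuclideanSpace.single j (1:ℝ) := by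
    ext i
    rw [show ((∑ j, w j • EuclideanSpace.single j (1:ℝ)) i)
        = ∑ j, (w j • EuclideanSpace.single j (1:ℝ)) i from
      by rw [WithLp.ofLp_sum]; exact Finset.sum_apply i Finset.univ _]
    simp [EuclideanSpace.single_apply]
  have hgradw : |fderiv ℝ L βs w| ≤ lam / 2 * ∑ j, |w j| := by
    have : fderiv ℝ L βs w = ∑ j, w j * fderiv ℝ L βs (EuclideanSpace.single j 1) := by
      conv_lhs => rw [hrepr]
      simp
    rw [this]
    calc |∑ j, w j * fderiv ℝ L βs (EuclideanSpace.single j 1)|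
        ≤ ∑ j, |w j * fderiv ℝ L βs (EuclideanSpace.single j 1)| :=
          Finset.abs_sum_le_sum_abs _ _
      _ ≤ ∑ j, |w j| * (lam / 2) := by
          apply Finset.sum_le_sum
          intro j _
          rw [abs_mul]
          exact mul_le_mul_of_nonneg_left (hgrad j) (abs_nonneg _)
      _ = lam / 2 * ∑ j, |w j| := by rw [← Finset.sum_mul]; ring
  -- minimality
  have hmins := hmin βs
  have hL1norm : ∑ j, |βs j| - ∑ j, |βt j| ≤ ∑ j ∈ S, |w j| - ∑ j ∈ Finset.univ.filter (fun j => ¬ βs j ≠ 0), |w j| := by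
    have hsplit : ∀ (f : Fin p → ℝ), ∑ j, f j
        = ∑ j ∈ S, f j + ∑ j ∈ Finset.univ.filter (fun j => ¬ βs j ≠ 0), f j :=
      fun f => (Finset.sum_filter_add_sum_filter_not _ _ f).symm
    rw [hsplit (fun j => |βs j|), hsplit (fun j => |βt j|)]
    have hA : ∑ j ∈ S, |βs j| - ∑ j ∈ S, |βt j| ≤ ∑ j ∈ S, |w j| := by
      rw [← Finset.sum_sub_distrib]
      apply Finset.sum_le_sum
      intro j _
      have : w j = βt j - βs j := by simp [hwdef]
      rw [this]
      have := abs_sub_abs_le_abs_sub (βs j) (βt j)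
      rw [abs_sub_comm] at this
      linarith
    have hB : ∑ j ∈ Finset.univ.filter (fun j => ¬ βs j ≠ 0), |βs j|
        - ∑ j ∈ Finset.univ.filter (fun j => ¬ βs j ≠ 0), |βt j|
        = - ∑ j ∈ Finset.univ.filter (fun j => ¬ βs j ≠ 0), |w j| := by
      rw [← Finset.sum_sub_distrib, ← Finset.sum_neg_distrib]
      apply Finset.sum_congr rfl
      intro j hj
      rw [Finset.mem_filter] at hj
      have h0 : βs j = 0 := by tauto
      have : w j = βt j - βs j := by simp [hwdef]
      rw [this, h0]
      simp
    linarith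
  have hsum : ∑ j, |w j| = ∑ j ∈ S, |w j| + ∑ j ∈ Finset.univ.filter (fun j => ¬ βs j ≠ 0), |w j| :=
    (Finset.sum_filter_add_sum_filter_not _ _ _).symm
  refine ⟨φ d, ?_, ?_⟩
  · rw [segment_eq_image']
    exact ⟨d, ⟨le_of_lt hd.1, le_of_lt (hd.2.trans hc.2)⟩, rfl⟩
  · have hfinal : g₂ d + lam * ∑ j, |w j| ≤ 4 * lam * ∑ j ∈ S, |w j| := by
      rw [hkey, hg1val, hg0val, hg10val, hsum]
      have e2 := mul_le_mul_of_nonneg_left hL1norm hlam.le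
      have e3 : -(fderiv ℝ L βs w) ≤ lam / 2 * ∑ j, |w j| := by
        have := neg_abs_le (fderiv ℝ L βs w)
        linarith [hgradw]
      rw [hsum] at e3
      linarith [hmins, e2, e3]
    exact hfinal
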